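/- Let {M_k} be Kraus operators of a TPCP map on H = H_S ⊕ H_R, and let R_k = F(M_k) be the canonical R-factors with blocks R_{S,k}, R_{P,k}, R_{R,k}. If R_{P,k} = 0 for all k, then for every choice of unitary controls {U_k} such that the controlled map T_c[ρ] = Σ_k U_k M_k ρ M_k† U_k† leaves the set of states supported on H_S invariant, the set of states supported on H_R is also invariant under T_c; consequently H_S cannot be made globally asymptotically stable by any such controls. -/

import Mathlib

open Matrix Filter
open scoped ComplexOrder

/-- The rank of the matrix formed by the first `j` columns of `A`. -/
noncomputable def colRank (n : ℕ) (A : Matrix (Fin n) (Fin n) ℂ) (j : ℕ) : ℕ :=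
  Module.finrank ℂ (Submodule.span ℂ ((fun l => Aᵀ l) '' {l : Fin n | (l : ℕ) < j}))

/-- `A = QR` is a canonical QR decomposition. -/
def IsCanonicalQR (n : ℕ) (A Q R : Matrix (Fin n) (Fin n) ℂ) : Prop :=
  Qᴴ * Q = 1 ∧ A = Q * R ∧
  (∀ i j : Fin n, colRank n A ((j : ℕ) + 1) ≤ (i : ℕ) → R i j = 0) ∧
  (∀ i j : Fin n, (∀ j' : Fin n, j' < j → R i j' = 0) → R i j ≠ 0 →
    (R i j).im = 0 ∧ 0 < (R i j).re)

lemma colRank_mono (n : ℕ) (A : Matrix (Fin n) (Fin n) ℂ) {s t : ℕ} (h : s ≤ t) :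
    colRank n A s ≤ colRank n A t := by
  apply Submodule.finrank_mono
  exact Submodule.span_mono (Set.image_mono (fun l hl => lt_of_lt_of_le hl h))

lemma colRank_zero (n : ℕ) (A : Matrix (Fin n) (Fin n) ℂ) : colRank n A 0 = 0 := by
  unfold colRank
  have : {l : Fin n | (l : ℕ) < 0} = ∅ := by ext l; simp
  rw [this]
  simp

lemma colRank_succ_le (n : ℕ) (A : Matrix (Fin n) (Fin n) ℂ) (t : ℕ) :
    colRank n A (t + 1) ≤ colRank n A t + 1 := by
  by_cases h : ∃ l0 : Fin n, (l0 : ℕ) = t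
  · obtain ⟨l0, hl0⟩ := h
    have hset : {l : Fin n | (l : ℕ) < t + 1} = insert l0 {l : Fin n | (l : ℕ) < t} := by
      ext l; simp only [Set.mem_setOf_eq, Set.mem_insert_iff]
      constructor
      · intro hl
        rcases Nat.lt_succ_iff_lt_or_eq.mp hl with h' | h'
        · exact Or.inr h'
        · exact Or.inl (Fin.ext (h'.trans hl0.symm))
      · rintro (rfl | hl)
        · omega
        · omega
    unfold colRank
    rw [hset, Set.image_insert_eq, Submodule.span_insert]
    have h1 := Submodule.finrank_sup_add_finrank_inf_eq
      (Submodule.span ℂ {Aᵀ l0})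
      (Submodule.span ℂ ((fun l => Aᵀ l) '' {l : Fin n | (l : ℕ) < t}))
    have h2 : Module.finrank ℂ (Submodule.span ℂ {Aᵀ l0}) ≤ 1 := by
      by_cases hz : Aᵀ l0 = 0
      · rw [hz, Submodule.span_zero_singleton]; simp
      · rw [finrank_span_singleton hz]
    omega
  · have hset : {l : Fin n | (l : ℕ) < t + 1} = {l : Fin n | (l : ℕ) < t} := by
      ext l; simp only [Set.mem_setOf_eq]
      constructor
      · intro hl
        rcases Nat.lt_succ_iff_lt_or_eq.mp hl with h' | h'
        · exact h'
        · exact absurd ⟨l, h'⟩ h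
      · omega
    unfold colRank; rw [hset]; omega

lemma colRank_le_self (n : ℕ) (A : Matrix (Fin n) (Fin n) ℂ) (t : ℕ) :
    colRank n A t ≤ t := by
  induction t with
  | zero => exact (colRank_zero n A).le
  | succ t ih => have := colRank_succ_le n A t; omega

lemma colRank_succ_eq_of_col_zero (n : ℕ) (A : Matrix (Fin n) (Fin n) ℂ) (t : ℕ)
    (h : ∀ l : Fin n, (l : ℕ) = t → Aᵀ l = 0) :
    colRank n A (t + 1) = colRank n A t := by
  unfold colRank
  have hspan : Submodule.span ℂ ((fun l => Aᵀ l) '' {l : Fin n | (l : ℕ) < t + 1})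
      = Submodule.span ℂ ((fun l => Aᵀ l) '' {l : Fin n | (l : ℕ) < t}) := by
    apply le_antisymm
    · rw [Submodule.span_le]
      rintro x ⟨l, hl, rfl⟩
      rcases Nat.lt_succ_iff_lt_or_eq.mp hl with h' | h'
      · exact Submodule.subset_span ⟨l, h', rfl⟩
      · show Aᵀ l ∈ _
        rw [h l h']; exact Submodule.zero_mem _
    · exact Submodule.span_mono (Set.image_mono (fun l hl => Nat.lt_succ_of_lt hl))
  rw [hspan]

lemma colRank_mul_left (n : ℕ) (Q A : Matrix (Fin n) (Fin n) ℂ) (hQ : Qᴴ * Q = 1) (t : ℕ) :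
    colRank n (Q * A) t = colRank n A t := by
  have hinj : Function.Injective Q.mulVecLin := by
    intro x y hxy
    have hx : ∀ z : Fin n → ℂ, Qᴴ *ᵥ (Q *ᵥ z) = z := by
      intro z; rw [Matrix.mulVec_mulVec, hQ, Matrix.one_mulVec]
    have := congrArg (fun v => Qᴴ *ᵥ v) hxy
    simpa [Matrix.mulVecLin_apply, hx] using this
  have hcol : (fun l => (Q * A)ᵀ l) = (Q.mulVecLin ∘ fun l => Aᵀ l) := by
    funext l
    ext i
    simp [Matrix.mulVecLin_apply, Matrix.mulVec, Matrix.mul_apply, dotProduct,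
      Matrix.transpose_apply]
  unfold colRank
  rw [hcol, Set.image_comp, Submodule.span_image]
  exact (LinearEquiv.finrank_eq
    (Submodule.equivMapOfInjective Q.mulVecLin hinj _)).symm

noncomputable def extL (m r : ℕ) : (Fin m → ℂ) →ₗ[ℂ] (Fin (m + r) → ℂ) where
  toFun v i := if h : (i : ℕ) < m then v ⟨i, h⟩ else 0
  map_add' u v := by funext i; by_cases h : (i : ℕ) < m <;> simp [h]
  map_smul' c v := by funext i; by_cases h : (i : ℕ) < m <;> simp [h]

noncomputable def HSsub (m r : ℕ) : Submodule ℂ (Fin (m + r) → ℂ) :=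
  LinearMap.range (extL m r)

lemma mem_HSsub_iff (m r : ℕ) (v : Fin (m + r) → ℂ) :
    v ∈ HSsub m r ↔ ∀ i : Fin (m + r), m ≤ (i : ℕ) → v i = 0 := by
  constructor
  · rintro ⟨w, rfl⟩ i hi
    simp only [extL, LinearMap.coe_mk, AddHom.coe_mk]
    rw [dif_neg (by omega)]
  · intro hv
    refine ⟨fun j => v (Fin.castAdd r j), ?_⟩
    funext i
    simp only [extL, LinearMap.coe_mk, AddHom.coe_mk]
    by_cases h : (i : ℕ) < m
    · rw [dif_pos h]
      congr 1
    · rw [dif_neg h]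
      exact (hv i (by omega)).symm

lemma extL_injective (m r : ℕ) : Function.Injective (extL m r) := by
  intro u v huv
  funext j
  have := congrFun huv (Fin.castAdd r j)
  simp only [extL, LinearMap.coe_mk, AddHom.coe_mk] at this
  rw [dif_pos (by simp [Fin.is_lt]), dif_pos (by simp [Fin.is_lt])] at this
  convert this using 2 <;> rfl

lemma finrank_HSsub (m r : ℕ) : Module.finrank ℂ (HSsub m r) = m := by
  rw [HSsub, LinearMap.finrank_range_of_inj (extL_injective m r)]
  simp [Module.finrank_pi]

lemma key_NP (m r : ℕ) (Rm V N : Matrix (Fin (m + r)) (Fin (m + r)) ℂ)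
    (hech : ∀ i j : Fin (m + r), colRank (m + r) Rm ((j : ℕ) + 1) ≤ (i : ℕ) → Rm i j = 0)
    (hRP : ∀ i j : Fin (m + r), (i : ℕ) < m → m ≤ (j : ℕ) → Rm i j = 0)
    (hV : Vᴴ * V = 1) (hN : N = V * Rm)
    (hNQ : ∀ i j : Fin (m + r), m ≤ (i : ℕ) → (j : ℕ) < m → N i j = 0) :
    ∀ i j : Fin (m + r), (i : ℕ) < m → m ≤ (j : ℕ) → N i j = 0 := by
  set s := colRank (m + r) Rm m with hs_def
  have hsm : s ≤ m := colRank_le_self _ _ _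
  rcases lt_or_eq_of_le hsm with hslt | hseq
  -- Case s < m : all columns ≥ m of Rm vanish
  · have hrk : ∀ d : ℕ, colRank (m + r) Rm (m + d) ≤ s ∧
        (∀ j : Fin (m + r), m ≤ (j : ℕ) → (j : ℕ) < m + d → ∀ i, Rm i j = 0) := by
      intro d
      induction d with
      | zero => exact ⟨le_of_eq rfl, fun j hj1 hj2 i => absurd hj2 (by omega)⟩
      | succ d ih =>
        have hcol : ∀ j : Fin (m + r), (j : ℕ) = m + d → ∀ i, Rm i j = 0 := by
          intro j hj i
          by_cases hi : (i : ℕ) < m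
          · exact hRP i j hi (by omega)
          · apply hech
            have h1 : colRank (m + r) Rm ((j : ℕ) + 1) ≤ colRank (m + r) Rm (m + d) + 1 := by
              rw [hj]; exact colRank_succ_le _ _ _
            have h2 := ih.1
            omega
        have heq : colRank (m + r) Rm (m + d + 1) = colRank (m + r) Rm (m + d) := by
          apply colRank_succ_eq_of_col_zero
          intro l hl
          funext i
          exact hcol l hl i
        constructor
        · rw [show m + (d + 1) = m + d + 1 by omega, heq]; exact ih.1
        · intro j hj1 hj2 i
          rcases lt_or_ge (j : ℕ) (m + d) with h | h
          · exact ih.2 j hj1 h i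
          · exact hcol j (by omega) i
    intro i j hi hj
    have hcols : ∀ l, Rm l j = 0 := (hrk ((j : ℕ) + 1)).2 j hj (by omega)
    rw [hN, Matrix.mul_apply]
    exact Finset.sum_eq_zero fun l _ => by rw [hcols l, mul_zero]
  -- Case s = m
  · have hW : Submodule.span ℂ ((fun l => Rmᵀ l) '' {l : Fin (m + r) | (l : ℕ) < m})
        = HSsub m r := by
      apply Submodule.eq_of_le_of_finrank_eq
      · rw [Submodule.span_le]
        rintro x ⟨l, hl, rfl⟩
        rw [SetLike.mem_coe, mem_HSsub_iff]
        intro i hi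
        show Rm i l = 0
        apply hech
        have : colRank (m + r) Rm ((l : ℕ) + 1) ≤ colRank (m + r) Rm m :=
          colRank_mono _ _ (by exact hl)
        omega
      · rw [finrank_HSsub]
        exact hseq
    have hVQ : ∀ a b : Fin (m + r), m ≤ (a : ℕ) → (b : ℕ) < m → V a b = 0 := by
      intro a b ha hb
      have h1 : Pi.single b (1 : ℂ) ∈ HSsub m r := by
        rw [mem_HSsub_iff]
        intro i hi
        exact Pi.single_eq_of_ne (fun h => by rw [h] at hi; omega) 1
      rw [← hW] at h1
      have h2 : V.mulVecLin (Pi.single b 1) ∈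
          Submodule.map V.mulVecLin
            (Submodule.span ℂ ((fun l => Rmᵀ l) '' {l : Fin (m + r) | (l : ℕ) < m})) :=
        Submodule.mem_map_of_mem h1
      rw [← Submodule.span_image, ← Set.image_comp] at h2
      have himg : (⇑V.mulVecLin ∘ fun l => Rmᵀ l) = fun l => Nᵀ l := by
        funext l
        ext i
        simp [Matrix.mulVecLin_apply, Matrix.mulVec, dotProduct, hN, Matrix.mul_apply,
          Matrix.transpose_apply]
      rw [himg] at h2
      have h3 : Submodule.span ℂ ((fun l => Nᵀ l) '' {l : Fin (m + r) | (l : ℕ) < m})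
          ≤ HSsub m r := by
        rw [Submodule.span_le]
        rintro x ⟨l, hl, rfl⟩
        rw [SetLike.mem_coe, mem_HSsub_iff]
        intro i hi
        exact hNQ i l hi hl
      have h4 := (mem_HSsub_iff m r _).mp (h3 h2) a ha
      simpa [Matrix.mulVecLin_apply, Matrix.mulVec_single] using h4
    set A : Matrix (Fin m) (Fin m) ℂ :=
      fun i j => V (Fin.castAdd r i) (Fin.castAdd r j) with hA_def
    set B : Matrix (Fin m) (Fin r) ℂ :=
      fun i j => V (Fin.castAdd r i) (Fin.natAdd m j) with hB_def
    have hVentry : ∀ x y : Fin (m + r), (Vᴴ * V) x y = (1 : Matrix (Fin (m+r)) (Fin (m+r)) ℂ) x y :=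
      fun x y => by rw [hV]
    have hAA : Aᴴ * A = 1 := by
      ext i j
      have h := hVentry (Fin.castAdd r i) (Fin.castAdd r j)
      rw [Matrix.mul_apply, Fin.sum_univ_add] at h
      have hz : ∀ l : Fin r,
          Vᴴ (Fin.castAdd r i) (Fin.natAdd m l) * V (Fin.natAdd m l) (Fin.castAdd r j) = 0 := by
        intro l
        rw [hVQ (Fin.natAdd m l) (Fin.castAdd r j) (by simp) (by simp [Fin.is_lt]), mul_zero]
      simp only [hz, Finset.sum_const_zero, add_zero] at h
      have hrhs : (1 : Matrix (Fin (m + r)) (Fin (m + r)) ℂ) (Fin.castAdd r i) (Fin.castAdd r j)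
          = (1 : Matrix (Fin m) (Fin m) ℂ) i j := by
        by_cases hij : i = j
        · subst hij; simp
        · rw [Matrix.one_apply_ne (fun hc => hij (Fin.ext (by simpa [Fin.ext_iff] using hc))),
            Matrix.one_apply_ne hij]
      rw [Matrix.mul_apply, ← hrhs, ← h]
      apply Finset.sum_congr rfl
      intro l _
      simp [Matrix.conjTranspose_apply, hA_def]
      left; rfl
    have hAB : Aᴴ * B = 0 := by
      ext i j
      have h := hVentry (Fin.castAdd r i) (Fin.natAdd m j)
      rw [Matrix.mul_apply, Fin.sum_univ_add] at h
      have hz : ∀ l : Fin r,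
          Vᴴ (Fin.castAdd r i) (Fin.natAdd m l) * V (Fin.natAdd m l) (Fin.natAdd m j) = 0 := by
        intro l
        rw [Matrix.conjTranspose_apply,
          hVQ (Fin.natAdd m l) (Fin.castAdd r i) (by simp) (by simp [Fin.is_lt]),
          star_zero, zero_mul]
      simp only [hz, Finset.sum_const_zero, add_zero] at h
      have hrhs : (1 : Matrix (Fin (m + r)) (Fin (m + r)) ℂ) (Fin.castAdd r i) (Fin.natAdd m j)
          = 0 := by
        apply Matrix.one_apply_ne
        intro hc
        have := congrArg Fin.val hc
        simp at this
        omega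
      rw [hrhs] at h
      rw [Matrix.mul_apply, Matrix.zero_apply, ← h]
      apply Finset.sum_congr rfl
      intro l _
      simp [Matrix.conjTranspose_apply, hA_def, hB_def]
      left; rfl
    have hB0 : B = 0 := by
      have h1 : A * Aᴴ = 1 := mul_eq_one_comm.mp hAA
      calc B = 1 * B := (Matrix.one_mul B).symm
        _ = A * Aᴴ * B := by rw [h1]
        _ = A * (Aᴴ * B) := Matrix.mul_assoc _ _ _
        _ = 0 := by rw [hAB, Matrix.mul_zero]
    intro i j hi hj
    rw [hN, Matrix.mul_apply]
    apply Finset.sum_eq_zero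
    intro l _
    by_cases hl : (l : ℕ) < m
    · rw [hRP l j hl hj, mul_zero]
    · have hV0 : V i l = 0 := by
        have hb := congrFun (congrFun hB0 ⟨(i : ℕ), hi⟩) ⟨(l : ℕ) - m, by omega⟩
        simp only [hB_def, Matrix.zero_apply] at hb
        have hi' : Fin.castAdd r (⟨(i : ℕ), hi⟩ : Fin m) = i := Fin.ext rfl
        have hl' : Fin.natAdd m (⟨(l : ℕ) - m, by omega⟩ : Fin r) = l := Fin.ext (by simp; omega)
        rwa [hi', hl'] at hb
      rw [hV0, zero_mul]

lemma psd_sum {n K : ℕ} (f : Fin K → Matrix (Fin n) (Fin n) ℂ)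
    (hf : ∀ k, (f k).PosSemidef) : (∑ k, f k).PosSemidef :=
  Finset.sum_induction f Matrix.PosSemidef (fun _ _ ha hb => ha.add hb)
    Matrix.PosSemidef.zero (fun k _ => hf k)

/-- if all the `R_{P,k}` blocks of the canonical factors vanish,
then any unitary control choice making the states supported on `H_S` invariant
also makes the states supported on `H_R` invariant, so `H_S` cannot be made
globally asymptotically stable. -/
theorem vanishing_RP_precludes_stabilization
    (m r K : ℕ) (hr : 0 < r)
    (M Q R : Fin K → Matrix (Fin (m + r)) (Fin (m + r)) ℂ)
    (hTP : ∑ k, (M k)ᴴ * M k = 1)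
    (hQR : ∀ k, IsCanonicalQR (m + r) (M k) (Q k) (R k))
    (hRP : ∀ k, ∀ (i : Fin m) (j : Fin r),
        R k (Fin.castAdd r i) (Fin.natAdd m j) = 0) :
    ∀ U : Fin K → Matrix (Fin (m + r)) (Fin (m + r)) ℂ,
      (∀ k, (U k)ᴴ * U k = 1) →
      (∀ ρ : Matrix (Fin (m + r)) (Fin (m + r)) ℂ,
        ρ.PosSemidef → ρ.trace = 1 →
        (∀ i j : Fin (m + r), m ≤ (i : ℕ) ∨ m ≤ (j : ℕ) → ρ i j = 0) →
        (∀ i j : Fin (m + r), m ≤ (i : ℕ) ∨ m ≤ (j : ℕ) →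
          (∑ k, U k * M k * ρ * (M k)ᴴ * (U k)ᴴ) i j = 0)) →
      ((∀ ρ : Matrix (Fin (m + r)) (Fin (m + r)) ℂ,
          ρ.PosSemidef → ρ.trace = 1 →
          (∀ i j : Fin (m + r), (i : ℕ) < m ∨ (j : ℕ) < m → ρ i j = 0) →
          (∀ i j : Fin (m + r), (i : ℕ) < m ∨ (j : ℕ) < m →
            (∑ k, U k * M k * ρ * (M k)ᴴ * (U k)ᴴ) i j = 0)) ∧
        ¬ (∀ ρ : Matrix (Fin (m + r)) (Fin (m + r)) ℂ,
            ρ.PosSemidef → ρ.trace = 1 →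
            Tendsto
              (fun t : ℕ =>
                (Matrix.diagonal (fun i : Fin (m + r) => if m ≤ (i : ℕ) then (1 : ℂ) else 0) *
                  ((fun σ => ∑ k, U k * M k * σ * (M k)ᴴ * (U k)ᴴ)^[t] ρ)).trace)
              atTop (nhds 0))) := by
  intro U hU hS
  have hQunit : ∀ k, (Q k)ᴴ * Q k = 1 := fun k => (hQR k).1
  have hM : ∀ k, M k = Q k * R k := fun k => (hQR k).2.1
  have hech : ∀ k, ∀ i j : Fin (m + r),
      colRank (m + r) (R k) ((j : ℕ) + 1) ≤ (i : ℕ) → R k i j = 0 := by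
    intro k i j h
    apply (hQR k).2.2.1 i j
    rw [hM k, colRank_mul_left _ _ _ (hQunit k)]
    exact h
  have hRP' : ∀ k, ∀ i j : Fin (m + r), (i : ℕ) < m → m ≤ (j : ℕ) → R k i j = 0 := by
    intro k i j hi hj
    have h := hRP k ⟨(i : ℕ), hi⟩ ⟨(j : ℕ) - m, by omega⟩
    have hi' : Fin.castAdd r (⟨(i : ℕ), hi⟩ : Fin m) = i := Fin.ext rfl
    have hj' : Fin.natAdd m (⟨(j : ℕ) - m, by omega⟩ : Fin r) = j := Fin.ext (by simp; omega)
    rwa [hi', hj'] at h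
  have hre : ∀ k (σ : Matrix (Fin (m + r)) (Fin (m + r)) ℂ),
      U k * M k * σ * (M k)ᴴ * (U k)ᴴ = (U k * M k) * σ * (U k * M k)ᴴ := by
    intro k σ
    simp only [Matrix.conjTranspose_mul, Matrix.mul_assoc]
  -- Step 1 : the Q-block of each controlled Kraus operator vanishes
  have hNQ : ∀ k, ∀ i j : Fin (m + r), m ≤ (i : ℕ) → (j : ℕ) < m →
      (U k * M k) i j = 0 := by
    intro k0 a b ha hb
    set ρb := Matrix.diagonal (fun i : Fin (m + r) => if i = b then (1 : ℂ) else 0) with hρb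
    have hPSD : ρb.PosSemidef :=
      Matrix.posSemidef_diagonal_iff.mpr (fun i => by split <;> simp)
    have htr : ρb.trace = 1 := by
      rw [Matrix.trace_diagonal]
      simp [Finset.sum_ite_eq']
    have hsupp : ∀ i j : Fin (m + r), m ≤ (i : ℕ) ∨ m ≤ (j : ℕ) → ρb i j = 0 := by
      intro i j hij
      by_cases h : i = j
      · subst h
        rw [hρb, Matrix.diagonal_apply_eq, if_neg]
        intro h'; subst h'; omega
      · rw [hρb]; exact Matrix.diagonal_apply_ne _ h
    have hap := hS ρb hPSD htr hsupp a a (Or.inl ha)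
    rw [Matrix.sum_apply] at hap
    have hterm : ∀ k, (U k * M k * ρb * (M k)ᴴ * (U k)ᴴ) a a
        = ((U k * M k) a b) * star ((U k * M k) a b) := by
      intro k
      rw [hre k ρb, hρb, Matrix.mul_apply]
      simp only [Matrix.mul_diagonal, Matrix.conjTranspose_apply, mul_ite, ite_mul,
        mul_one, mul_zero, zero_mul]
      rw [Finset.sum_ite_eq' Finset.univ b (fun c => (U k * M k) a c * star ((U k * M k) a c))]
      simp
    simp only [hterm] at hap
    have hcast : ((∑ k, Complex.normSq ((U k * M k) a b) : ℝ) : ℂ) = 0 := by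
      push_cast
      rw [← hap]
      apply Finset.sum_congr rfl
      intro k _
      rw [← Complex.mul_conj]
      rfl
    have h4 : ∑ k, Complex.normSq ((U k * M k) a b) = 0 := by exact_mod_cast hcast
    have h5 := (Finset.sum_eq_zero_iff_of_nonneg
      (fun k _ => Complex.normSq_nonneg _)).mp h4 k0 (Finset.mem_univ k0)
    exact Complex.normSq_eq_zero.mp h5
  -- Step 2 : the P-block also vanishes
  have hNP : ∀ k, ∀ i j : Fin (m + r), (i : ℕ) < m → m ≤ (j : ℕ) →
      (U k * M k) i j = 0 := by
    intro k
    apply key_NP m r (R k) (U k * Q k) (U k * M k) (hech k) (hRP' k)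
    · rw [Matrix.conjTranspose_mul, Matrix.mul_assoc, ← Matrix.mul_assoc (U k)ᴴ (U k) (Q k),
        hU k, Matrix.one_mul, hQunit k]
    · rw [hM k, Matrix.mul_assoc]
    · exact hNQ k
  -- Part (a) : invariance of states supported on H_R
  have hApart : ∀ ρ : Matrix (Fin (m + r)) (Fin (m + r)) ℂ,
      ρ.PosSemidef → ρ.trace = 1 →
      (∀ i j : Fin (m + r), (i : ℕ) < m ∨ (j : ℕ) < m → ρ i j = 0) →
      (∀ i j : Fin (m + r), (i : ℕ) < m ∨ (j : ℕ) < m →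
        (∑ k, U k * M k * ρ * (M k)ᴴ * (U k)ᴴ) i j = 0) := by
    intro ρ hPSD htr hsupp i j hij
    rw [Matrix.sum_apply]
    apply Finset.sum_eq_zero
    intro k _
    rw [hre k ρ, Matrix.mul_apply]
    apply Finset.sum_eq_zero
    intro d _
    rw [Matrix.mul_apply, Finset.sum_mul]
    apply Finset.sum_eq_zero
    intro c _
    rcases hij with hi | hj
    · by_cases hc : (c : ℕ) < m
      · rw [hsupp c d (Or.inl hc), mul_zero, zero_mul]
      · rw [hNP k i c hi (by omega), zero_mul, zero_mul]
    · by_cases hd : (d : ℕ) < m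
      · rw [hsupp c d (Or.inr hd), mul_zero, zero_mul]
      · rw [Matrix.conjTranspose_apply, hNP k j d hj (by omega), star_zero, mul_zero]
  refine ⟨hApart, ?_⟩
  -- Part (b) : no global asymptotic stabilization
  intro hGAS
  have htrace : ∀ σ : Matrix (Fin (m + r)) (Fin (m + r)) ℂ,
      (∑ k, U k * M k * σ * (M k)ᴴ * (U k)ᴴ).trace = σ.trace := by
    intro σ
    rw [Matrix.trace_sum]
    have h1 : ∀ k, (U k * M k * σ * (M k)ᴴ * (U k)ᴴ).trace = ((M k)ᴴ * M k * σ).trace := by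
      intro k
      rw [hre k σ, Matrix.trace_mul_cycle]
      have h2 : (U k * M k)ᴴ * (U k * M k) = (M k)ᴴ * M k := by
        rw [Matrix.conjTranspose_mul, Matrix.mul_assoc, ← Matrix.mul_assoc (U k)ᴴ (U k) (M k),
          hU k, Matrix.one_mul]
      rw [h2]
    simp only [h1]
    rw [← Matrix.trace_sum, ← Finset.sum_mul, hTP, Matrix.one_mul]
  set ρ0 := Matrix.diagonal
    (fun i : Fin (m + r) => if m ≤ (i : ℕ) then ((r : ℂ))⁻¹ else 0) with hρ0
  have hrinv : (0 : ℂ) ≤ ((r : ℂ))⁻¹ := by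
    have h1 : ((r : ℂ))⁻¹ = (((r : ℝ)⁻¹ : ℝ) : ℂ) := by push_cast; ring
    rw [h1]
    rw [Complex.zero_le_real]
    positivity
  have hρ0PSD : ρ0.PosSemidef :=
    Matrix.posSemidef_diagonal_iff.mpr (fun i => by split; exacts [hrinv, le_refl 0])
  have hρ0tr : ρ0.trace = 1 := by
    rw [hρ0, Matrix.trace_diagonal, Fin.sum_univ_add]
    have hc : ∀ i : Fin m,
        (if m ≤ ((Fin.castAdd r i : Fin (m + r)) : ℕ) then ((r : ℂ))⁻¹ else 0) = 0 := by
      intro i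
      rw [if_neg]
      simp only [Fin.coe_castAdd]
      omega
    have hn : ∀ i : Fin r,
        (if m ≤ ((Fin.natAdd m i : Fin (m + r)) : ℕ) then ((r : ℂ))⁻¹ else 0) = ((r : ℂ))⁻¹ := by
      intro i
      rw [if_pos]
      simp
    simp only [hc, hn, Finset.sum_const_zero, zero_add, Finset.sum_const,
      Finset.card_univ, Fintype.card_fin, nsmul_eq_mul]
    exact mul_inv_cancel₀ (Nat.cast_ne_zero.mpr hr.ne')
  have hρ0supp : ∀ i j : Fin (m + r), (i : ℕ) < m ∨ (j : ℕ) < m → ρ0 i j = 0 := by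
    intro i j hij
    by_cases h : i = j
    · subst h
      rw [hρ0, Matrix.diagonal_apply_eq, if_neg]
      omega
    · rw [hρ0]; exact Matrix.diagonal_apply_ne _ h
  have hiter : ∀ t : ℕ,
      (((fun σ => ∑ k, U k * M k * σ * (M k)ᴴ * (U k)ᴴ)^[t] ρ0)).PosSemidef ∧
      (((fun σ => ∑ k, U k * M k * σ * (M k)ᴴ * (U k)ᴴ)^[t] ρ0)).trace = 1 ∧
      (∀ i j : Fin (m + r), (i : ℕ) < m ∨ (j : ℕ) < m →
        ((fun σ => ∑ k, U k * M k * σ * (M k)ᴴ * (U k)ᴴ)^[t] ρ0) i j = 0) := by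
    intro t
    induction t with
    | zero => exact ⟨hρ0PSD, hρ0tr, hρ0supp⟩
    | succ t ih =>
      obtain ⟨h1, h2, h3⟩ := ih
      rw [Function.iterate_succ_apply']
      refine ⟨?_, ?_, ?_⟩
      · apply psd_sum
        intro k
        rw [hre k _]
        exact h1.mul_mul_conjTranspose_same (U k * M k)
      · rw [← h2]
        exact htrace _
      · exact hApart _ h1 h2 h3
  have hconst : ∀ t : ℕ,
      (Matrix.diagonal (fun i : Fin (m + r) => if m ≤ (i : ℕ) then (1 : ℂ) else 0) *
        ((fun σ => ∑ k, U k * M k * σ * (M k)ᴴ * (U k)ᴴ)^[t] ρ0)).trace = 1 := by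
    intro t
    obtain ⟨_, h2, h3⟩ := hiter t
    set X := (fun σ => ∑ k, U k * M k * σ * (M k)ᴴ * (U k)ᴴ)^[t] ρ0 with hX
    have hdm : (Matrix.diagonal (fun i : Fin (m + r) => if m ≤ (i : ℕ) then (1 : ℂ) else 0) *
        X).trace = ∑ i : Fin (m + r), (if m ≤ (i : ℕ) then (1 : ℂ) else 0) * X i i := by
      simp [Matrix.trace, Matrix.diag, Matrix.diagonal_mul]
    rw [hdm]
    have : ∀ i : Fin (m + r), (if m ≤ (i : ℕ) then (1 : ℂ) else 0) * X i i = X i i := by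
      intro i
      by_cases h : m ≤ (i : ℕ)
      · rw [if_pos h, one_mul]
      · rw [if_neg h, zero_mul, h3 i i (Or.inl (by omega))]
    simp only [this]
    exact h2
  have hlim := hGAS ρ0 hρ0PSD hρ0tr
  rw [show (fun t : ℕ =>
      (Matrix.diagonal (fun i : Fin (m + r) => if m ≤ (i : ℕ) then (1 : ℂ) else 0) *
        ((fun σ => ∑ k, U k * M k * σ * (M k)ᴴ * (U k)ᴴ)^[t] ρ0)).trace)
      = fun _ : ℕ => (1 : ℂ) from funext hconst] at hlim
  exact one_ne_zero (tendsto_nhds_unique tendsto_const_nhds hlim)
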